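/- Let $A$ be a left-symmetric conformal algebra. If $\omega \in C^2(A,A)$ generates a linear deformation of $A$, then $\tilde\omega$ defined by $\tilde\omega_\lambda(a,b) = \omega_\lambda(a,b) - \omega_{-\partial-\lambda}(b,a)$ generates a linear deformation of the sub-adjacent Lie conformal algebra $g(A)$: that is, $[a_\lambda b] + t\tilde\omega_\lambda(a,b)$ is a Lie conformal bracket. -/

import Mathlib

/- Encoding conventions.
A `ℂ[∂]`-module is encoded as a complex vector space `A` together with an
endomorphism `D : Module.End ℂ A` (the action of `∂`).
A polynomial `Σ cₙ λⁿ ∈ A[λ]` is encoded by its coefficient family `ℕ →₀ A`,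
and `ev l p` is its evaluation at `λ = l`.  Since `ℂ` is infinite, a polynomial
identity in the formal variables `λ, μ, …` is equivalent to the corresponding
family of identities for all complex values of the variables, which is how all
axioms are stated below.
A `λ`-product `a ⊗ b ↦ a_λ b ∈ A[λ]` is encoded as `mul : A → A → (ℕ →₀ A)`
(the coefficients of `a_λ b`), its evaluation at `λ = l` being `ev l (mul a b)`.
`substNeg D p` is the result of substituting the variable of `p` by `-∂-λ`:
it is again a polynomial in `λ` with coefficients `ℕ →₀ A`, so that
`b_{-∂-λ} a` is encoded as `substNeg D (mul b a)` (as a polynomial in `λ`). -/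

namespace LSCpaper

open Finsupp

variable {A M V : Type*} [AddCommGroup A] [Module ℂ A] [AddCommGroup M] [Module ℂ M]
  [AddCommGroup V] [Module ℂ V]

/-- Evaluation of a polynomial with coefficients in `V` at a complex number. -/
noncomputable def ev (l : ℂ) (p : ℕ →₀ V) : V := p.sum fun n c => l ^ n • c

/-- Substitution of `-∂ - λ` for the variable of `p`; the result is the
coefficient family (in `λ`) of the resulting polynomial. -/
noncomputable def substNeg (D : Module.End ℂ A) (p : ℕ →₀ A) : ℕ →₀ A :=
  p.sum fun i c => ∑ k ∈ Finset.range (i + 1),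
    Finsupp.single k ((((-1 : ℂ) ^ k * (i.choose k : ℂ))) • ((-D) ^ (i - k)) c)

/-- `ℂ`-bilinearity of a `λ`-product. -/
def Bilin (f : A → M → ℕ →₀ V) : Prop :=
  (∀ a a' b, f (a + a') b = f a b + f a' b) ∧
  (∀ (r : ℂ) (a : A) (b : M), f (r • a) b = r • f a b) ∧
  (∀ a b b', f a (b + b') = f a b + f a b') ∧
  (∀ (r : ℂ) (a : A) (b : M), f a (r • b) = r • f a b)

/-- `A` with `∂`-action `D` and `λ`-product `mul` is a left-symmetric conformal
algebra. -/
structure IsLSC (D : Module.End ℂ A) (mul : A → A → ℕ →₀ A) : Prop where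
  bilin : Bilin mul
  sesq1 : ∀ (l : ℂ) (a b : A), ev l (mul (D a) b) = (-l) • ev l (mul a b)
  sesq2 : ∀ (l : ℂ) (a b : A), ev l (mul a (D b)) = D (ev l (mul a b)) + l • ev l (mul a b)
  lsym : ∀ (l m : ℂ) (a b c : A),
    ev (l + m) (mul (ev l (mul a b)) c) - ev l (mul a (ev m (mul b c))) =
      ev (l + m) (mul (ev m (mul b a)) c) - ev m (mul b (ev l (mul a c)))

/-- `A` with `∂`-action `D` and `λ`-bracket `br` is a Lie conformal algebra. -/
structure IsLieConf (D : Module.End ℂ A) (br : A → A → ℕ →₀ A) : Prop where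
  bilin : Bilin br
  sesq1 : ∀ (l : ℂ) (a b : A), ev l (br (D a) b) = (-l) • ev l (br a b)
  sesq2 : ∀ (l : ℂ) (a b : A), ev l (br a (D b)) = D (ev l (br a b)) + l • ev l (br a b)
  skew : ∀ (l : ℂ) (a b : A), ev l (br a b) = - ev l (substNeg D (br b a))
  jacobi : ∀ (l m : ℂ) (a b c : A),
    ev l (br a (ev m (br b c))) =
      ev (l + m) (br (ev l (br a b)) c) + ev m (br b (ev l (br a c)))

/-- The evaluated bracket `[a_λ b] = a_λ b - b_{-∂-λ} a` of the sub-adjacent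
Lie conformal algebra. -/
noncomputable def brEv (D : Module.End ℂ A) (mul : A → A → ℕ →₀ A) (l : ℂ) (a b : A) : A :=
  ev l (mul a b) - ev l (substNeg D (mul b a))

end LSCpaper

namespace LSCpaper

open Finsupp

section Aux

variable {A M V : Type*} [AddCommGroup A] [Module ℂ A] [AddCommGroup M] [Module ℂ M]
  [AddCommGroup V] [Module ℂ V]


noncomputable def opE (T : Module.End ℂ A) : (ℕ →₀ A) →ₗ[ℂ] A :=
  Finsupp.lsum ℂ fun n => (T ^ n : Module.End ℂ A)

lemma opE_single (T : Module.End ℂ A) (n : ℕ) (c : A) : opE T (single n c) = (T ^ n) c := by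
  simp [opE]

lemma ev_eq_opE (l : ℂ) (p : ℕ →₀ A) : ev l p = opE (l • 1) p := by
  rw [ev, opE, Finsupp.lsum_apply]
  refine Finsupp.sum_congr fun n _ => ?_
  simp [smul_pow]

noncomputable def shiftF (j : ℕ) : (ℕ →₀ A) →ₗ[ℂ] (ℕ →₀ A) :=
  Finsupp.lsum ℂ fun n => lsingle (n + j)

noncomputable def mapL (φ : A →ₗ[ℂ] M) : (ℕ →₀ A) →ₗ[ℂ] (ℕ →₀ M) :=
  Finsupp.lsum ℂ fun n => (lsingle n).comp φ

noncomputable def subst (S : Module.End ℂ A) : (ℕ →₀ A) →ₗ[ℂ] (ℕ →₀ A) :=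
  Finsupp.lsum ℂ fun n => ∑ k ∈ Finset.range (n + 1),
    (lsingle k).comp (((n.choose k : ℂ) • (S ^ (n - k)) : Module.End ℂ A))

noncomputable def altF : (ℕ →₀ A) →ₗ[ℂ] (ℕ →₀ A) :=
  Finsupp.lsum ℂ fun n => ((-1 : ℂ) ^ n) • lsingle n

lemma mapL_single (φ : A →ₗ[ℂ] M) (n : ℕ) (c : A) : mapL φ (single n c) = single n (φ c) := by
  simp [mapL]

lemma opE_shiftF (T : Module.End ℂ A) (j : ℕ) (p : ℕ →₀ A) :
    opE T (shiftF j p) = (T ^ j) (opE T p) := by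
  suffices h : (opE T).comp (shiftF j) = ((T ^ j : Module.End ℂ A) ∘ₗ opE T) from
    LinearMap.congr_fun h p
  apply Finsupp.lhom_ext
  intro n c
  simp only [LinearMap.comp_apply, shiftF, Finsupp.lsum_single, LinearMap.id_apply, opE_single]
  rw [show ((lsingle (n+j)) c : ℕ →₀ A) = single (n+j) c from rfl, opE_single]
  rw [show (T:Module.End ℂ A)^(n+j) = T^j * T^n by rw [pow_add, (Commute.pow_pow_self T n j).eq]]
  rfl

lemma opE_subst {S T : Module.End ℂ A} (h : Commute S T) (p : ℕ →₀ A) :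
    opE T (subst S p) = opE (S + T) p := by
  suffices hh : (opE T).comp (subst S) = opE (S + T) from LinearMap.congr_fun hh p
  apply Finsupp.lhom_ext
  intro n c
  rw [LinearMap.comp_apply, opE_single]
  have : subst S (single n c) = ∑ k ∈ Finset.range (n + 1),
      single k ((n.choose k : ℂ) • (S ^ (n - k)) c) := by
    simp [subst]
  rw [this, map_sum]
  have hpow : (S + T) ^ n = ∑ k ∈ Finset.range (n + 1),
      T ^ k * S ^ (n - k) * (n.choose k : Module.End ℂ A) := by
    rw [add_comm S T]
    exact (h.symm.add_pow n)
  rw [hpow]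
  rw [LinearMap.sum_apply]
  refine Finset.sum_congr rfl fun k hk => ?_
  rw [opE_single]
  simp [Module.End.mul_apply, Module.End.natCast_apply, Nat.cast_smul_eq_nsmul ℂ, map_nsmul]

lemma opE_altF (T : Module.End ℂ A) (p : ℕ →₀ A) : opE T (altF p) = opE (-T) p := by
  suffices hh : (opE T).comp altF = opE (-T) from LinearMap.congr_fun hh p
  apply Finsupp.lhom_ext
  intro n c
  rw [LinearMap.comp_apply]
  have h1 : (altF (single n c) : ℕ →₀ A) = ((-1:ℂ)^n) • single n c := by simp [altF]
  rw [h1]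
  rw [map_smul, opE_single, opE_single]
  rw [show ((-T)^n : Module.End ℂ A) = ((-1:ℂ)^n) • T^n by
    rw [show (-T : Module.End ℂ A) = ((-1:ℂ)) • T by simp, smul_pow]]
  rfl

lemma substNeg_single (D : Module.End ℂ A) (n : ℕ) (c : A) :
    substNeg D (single n c) = ∑ k ∈ Finset.range (n + 1),
      Finsupp.single k ((((-1 : ℂ) ^ k * (n.choose k : ℂ))) • ((-D) ^ (n - k)) c) := by
  rw [substNeg]
  apply Finsupp.sum_single_index
  simp

lemma substNeg_add (D : Module.End ℂ A) (p q : ℕ →₀ A) :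
    substNeg D (p + q) = substNeg D p + substNeg D q := by
  rw [substNeg, substNeg, substNeg]
  apply Finsupp.sum_add_index'
  · intro i; simp
  · intro i c1 c2
    rw [← Finset.sum_add_distrib]
    refine Finset.sum_congr rfl fun k _ => ?_
    rw [map_add, smul_add, single_add]

lemma substNeg_eq (D : Module.End ℂ A) (p : ℕ →₀ A) :
    substNeg D p = subst D (altF p) := by
  induction p using Finsupp.induction with
  | zero => rw [show (substNeg D 0 : ℕ →₀ A) = 0 from Finsupp.sum_zero_index]; simp
  | single_add n c f hn hc ih =>
    rw [substNeg_add, ih, map_add, map_add]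
    congr 1
    rw [substNeg_single]
    have h1 : (altF (single n c) : ℕ →₀ A) = ((-1:ℂ)^n) • single n c := by simp [altF]
    rw [h1, map_smul]
    have h2 : (subst D (single n c) : ℕ →₀ A) = ∑ k ∈ Finset.range (n + 1),
        single k ((n.choose k : ℂ) • (D ^ (n - k)) c) := by
      simp [subst]
    rw [h2, Finset.smul_sum]
    refine Finset.sum_congr rfl fun k hk => ?_
    rw [smul_single]
    congr 1
    rw [show ((-D)^(n-k) : Module.End ℂ A) = ((-1:ℂ)^(n-k)) • D^(n-k) by
      rw [show (-D : Module.End ℂ A) = ((-1:ℂ)) • D by simp, smul_pow]]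
    rw [LinearMap.smul_apply, smul_smul, smul_smul]
    congr 1
    have hkn : k ≤ n := Nat.lt_succ_iff.mp (Finset.mem_range.mp hk)
    have : (-1:ℂ)^k * (-1:ℂ)^(n-k) = (-1:ℂ)^n := by
      rw [← pow_add, Nat.add_sub_cancel' hkn]
    linear_combination (↑(n.choose k):ℂ) * this



lemma substNeg_smul (D : Module.End ℂ A) (t : ℂ) (p : ℕ →₀ A) :
    substNeg D (t • p) = t • substNeg D p := by
  rw [substNeg_eq, substNeg_eq, map_smul, map_smul]

lemma commute_smul_one (D : Module.End ℂ A) (γ : ℂ) :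
    Commute D (γ • (1 : Module.End ℂ A)) := (Commute.one_right D).smul_right γ

lemma opE_substNeg {D T : Module.End ℂ A} (h : Commute D T) (p : ℕ →₀ A) :
    opE T (substNeg D p) = opE (-D - T) p := by
  rw [substNeg_eq, opE_subst h, opE_altF]
  congr 1
  rw [sub_eq_add_neg, neg_add]

lemma ev_inj {p q : ℕ →₀ A} (h : ∀ l : ℂ, ev l p = ev l q) : p = q := by
  ext n
  have key : ∀ φ : Module.Dual ℂ A, φ (p n) = φ (q n) := by
    intro φ
    set F : (ℕ →₀ A) → Polynomial ℂ := fun r => r.sum fun m c => Polynomial.monomial m (φ c)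
      with hFdef
    have heval : ∀ (r : ℕ →₀ A) (l : ℂ), (F r).eval l = φ (ev l r) := by
      intro r l
      rw [hFdef, ev]
      simp only [Finsupp.sum]
      rw [Polynomial.eval_finset_sum, map_sum]
      refine Finset.sum_congr rfl fun m _ => ?_
      rw [Polynomial.eval_monomial, map_smul, smul_eq_mul, mul_comm]
    have hF : F p = F q := Polynomial.funext fun l => by rw [heval, heval, h l]
    have hcoeff : ∀ r : ℕ →₀ A, (F r).coeff n = φ (r n) := by
      intro r
      rw [hFdef]
      simp only [Finsupp.sum, Polynomial.finset_sum_coeff, Polynomial.coeff_monomial]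
      rw [Finset.sum_ite_eq' r.support n (fun m => φ (r m))]
      by_cases hn : n ∈ r.support
      · rw [if_pos hn]
      · rw [if_neg hn, Finsupp.notMem_support_iff.mp hn, map_zero]
    rw [← hcoeff p, ← hcoeff q, hF]
  have h0 : ∀ φ : Module.Dual ℂ A, φ (p n - q n) = 0 := fun φ => by
    rw [map_sub, key φ, sub_self]
  exact sub_eq_zero.mp ((Module.forall_dual_apply_eq_zero_iff ℂ (p n - q n)).mp h0)

lemma psi_pow_apply {B : Type*} [AddCommGroup B] [Module ℂ B] (ψ : A →ₗ[ℂ] B)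
    {S : Module.End ℂ A} {T : Module.End ℂ B} (hc : ∀ x, ψ (S x) = T (ψ x)) :
    ∀ (n : ℕ) (x : A), ψ ((S ^ n) x) = (T ^ n) (ψ x) := by
  intro n
  induction n with
  | zero => intro x; simp
  | succ n ih =>
    intro x
    rw [pow_succ, pow_succ, Module.End.mul_apply, Module.End.mul_apply, ih (S x), hc x]

lemma psi_opE {B : Type*} [AddCommGroup B] [Module ℂ B] (ψ : A →ₗ[ℂ] B)
    {S : Module.End ℂ A} {T : Module.End ℂ B} (hc : ∀ x, ψ (S x) = T (ψ x)) (q : ℕ →₀ A) :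
    ψ (opE S q) = opE T (mapL ψ q) := by
  suffices hh : ψ.comp (opE S) = (opE T).comp (mapL ψ) from LinearMap.congr_fun hh q
  apply Finsupp.lhom_ext
  intro n c
  simp only [LinearMap.comp_apply, opE_single, mapL_single]
  exact psi_pow_apply ψ hc n c

lemma ev_sub (l : ℂ) (p q : ℕ →₀ A) : ev l (p - q) = ev l p - ev l q := by
  rw [ev_eq_opE, ev_eq_opE, ev_eq_opE, map_sub]

lemma ev_add' (l : ℂ) (p q : ℕ →₀ A) : ev l (p + q) = ev l p + ev l q := by
  rw [ev_eq_opE, ev_eq_opE, ev_eq_opE, map_add]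

lemma ev_smul (l : ℂ) (t : ℂ) (p : ℕ →₀ A) : ev l (t • p) = t • ev l p := by
  rw [ev_eq_opE, ev_eq_opE, map_smul]

lemma substNeg_sub (D : Module.End ℂ A) (p q : ℕ →₀ A) :
    substNeg D (p - q) = substNeg D p - substNeg D q := by
  rw [substNeg_eq, substNeg_eq, substNeg_eq, map_sub, map_sub]

noncomputable def bilinMap (mul : A → A → ℕ →₀ A) (hb : Bilin mul) :
    A →ₗ[ℂ] A →ₗ[ℂ] (ℕ →₀ A) :=
  LinearMap.mk₂ ℂ mul hb.1 hb.2.1 hb.2.2.1 hb.2.2.2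

@[simp] lemma bilinMap_apply (mul : A → A → ℕ →₀ A) (hb : Bilin mul) (x y : A) :
    bilinMap mul hb x y = mul x y := rfl

section Rules

variable {D : Module.End ℂ A} {mul : A → A → ℕ →₀ A} (h : IsLSC D mul)

lemma commute_D_negsub (γ : ℂ) : Commute D (-D - γ • (1 : Module.End ℂ A)) :=
  ((Commute.refl D).neg_right).sub_right (commute_smul_one D γ)

include h

lemma FS1 (x y : A) : mul (D x) y = -(shiftF 1 (mul x y)) := by
  apply ev_inj
  intro l
  rw [h.sesq1]
  have : ev l (-(shiftF 1 (mul x y))) = -(ev l (shiftF 1 (mul x y))) := by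
    rw [ev_eq_opE, ev_eq_opE, map_neg]
  rw [this, ev_eq_opE (p := shiftF 1 (mul x y)), opE_shiftF, pow_one, ← ev_eq_opE]
  simp [neg_smul]

lemma FS2 (x y : A) : mul x (D y) = mapL (D : A →ₗ[ℂ] A) (mul x y) + shiftF 1 (mul x y) := by
  apply ev_inj
  intro l
  rw [h.sesq2, ev_add']
  congr 1
  · rw [ev_eq_opE, ev_eq_opE]
    exact psi_opE (D : A →ₗ[ℂ] A) (S := l • 1) (T := l • 1)
      (fun x => by simp) (mul x y)
  · rw [show ev l ((shiftF 1) (mul x y)) = (l • (1:Module.End ℂ A)) (opE (l • 1) (mul x y))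
      by rw [ev_eq_opE, opE_shiftF, pow_one], ev_eq_opE]
    simp

lemma R2op (T : Module.End ℂ A) (x y : A) :
    opE T (mul (D x) y) = -(T (opE T (mul x y))) := by
  rw [FS1 h, map_neg, opE_shiftF, pow_one]

lemma R3op {T : Module.End ℂ A} (hDT : Commute D T) (x y : A) :
    opE T (mul x (D y)) = D (opE T (mul x y)) + T (opE T (mul x y)) := by
  rw [FS2 h, map_add, opE_shiftF, pow_one]
  congr 1
  exact (psi_opE (D : A →ₗ[ℂ] A) (S := T) (T := T)
    (fun x => by
      have := LinearMap.congr_fun hDT.eq x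
      simpa [Module.End.mul_apply] using this) (mul x y)).symm

omit h

lemma Qe_opE (γ : ℂ) (p : ℕ →₀ A) :
    ev γ (substNeg D p) = opE (-D - γ • 1) p := by
  rw [ev_eq_opE, opE_substNeg (commute_smul_one D γ)]

include h

set_option maxHeartbeats 800000 in
lemma E1 (s γ : ℂ) (x y z : A) :
    ev s (mul (ev γ (substNeg D (mul x y))) z) = ev s (mul (ev (s - γ) (mul x y)) z) := by
  set ψ : A →ₗ[ℂ] A := (opE (s • 1)).comp ((bilinMap mul h.bilin).flip z) with hψ
  have hψa : ∀ x', ψ x' = ev s (mul x' z) := fun x' => by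
    rw [hψ, LinearMap.comp_apply, LinearMap.flip_apply, bilinMap_apply, ← ev_eq_opE]
  have hDψ : ∀ x', ψ (D x') = -(s • ψ x') := fun x' => by
    have e1 : ψ (D x') = opE (s • 1) (mul (D x') z) := rfl
    have e2 : ψ x' = opE (s • 1) (mul x' z) := rfl
    rw [e1, e2, R2op h (s • 1) x' z]
    rfl
  have hc1 : ∀ x', ψ ((-D - γ • 1) x') = ((s - γ) • (1:Module.End ℂ A)) (ψ x') := by
    intro x'
    have h1 : (-D - γ • (1:Module.End ℂ A)) x' = -(D x') - γ • x' := by simp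
    rw [h1, map_sub, map_neg, hDψ, map_smul, neg_neg]
    rw [LinearMap.smul_apply, Module.End.one_apply, sub_smul]
  have hc2 : ∀ x', ψ (((s - γ) • (1:Module.End ℂ A)) x')
      = ((s - γ) • (1:Module.End ℂ A)) (ψ x') := fun x' => by simp
  rw [Qe_opE, ← hψa, ev_eq_opE (l := s - γ), ← hψa,
    psi_opE ψ hc1 (mul x y), psi_opE ψ hc2 (mul x y)]

set_option maxHeartbeats 800000 in
lemma E2 (σ γ : ℂ) (x y z : A) :
    ev σ (substNeg D (mul x (ev γ (substNeg D (mul y z)))))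
      = ev σ (substNeg D (mul x (ev (σ - γ) (mul y z)))) := by
  set T : Module.End ℂ A := -D - σ • 1 with hT
  set ψ : A →ₗ[ℂ] A := (opE T).comp (bilinMap mul h.bilin x) with hψ
  have hψa : ∀ w, ψ w = ev σ (substNeg D (mul x w)) := fun w => by
    rw [Qe_opE]; rfl
  have hDψ : ∀ w, ψ (D w) = D (ψ w) + T (ψ w) := fun w => by
    have e1 : ψ (D w) = opE T (mul x (D w)) := rfl
    have e2 : ψ w = opE T (mul x w) := rfl
    rw [e1, e2, R3op h (hT ▸ commute_D_negsub σ) x w]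
  have hc1 : ∀ w, ψ ((-D - γ • 1) w) = ((σ - γ) • (1:Module.End ℂ A)) (ψ w) := by
    intro w
    have h1 : (-D - γ • (1:Module.End ℂ A)) w = -(D w) - γ • w := by simp
    rw [h1, map_sub, map_neg, hDψ, map_smul, hT]
    simp only [LinearMap.sub_apply, LinearMap.neg_apply, LinearMap.smul_apply,
      Module.End.one_apply]
    rw [sub_smul]
    abel
  have hc2 : ∀ w, ψ (((σ - γ) • (1:Module.End ℂ A)) w)
      = ((σ - γ) • (1:Module.End ℂ A)) (ψ w) := fun w => by simp
  rw [← hψa, ← hψa, Qe_opE, ev_eq_opE (l := σ - γ),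
    psi_opE ψ hc1 (mul y z), psi_opE ψ hc2 (mul y z)]

set_option maxHeartbeats 1600000 in
lemma LSpack (l : ℂ) (a b c : A) :
    subst (l • 1) (mul (ev l (mul a b)) c)
      - mapL ((opE (l • 1)).comp (bilinMap mul h.bilin a)) (mul b c)
    = (Finsupp.lsum ℂ fun j => (shiftF j) ∘ₗ (subst (l • 1))
        ∘ₗ ((bilinMap mul h.bilin).flip c)) (mul b a)
      - mul b (ev l (mul a c)) := by
  apply ev_inj
  intro m
  rw [ev_sub, ev_sub]
  have hsc : Commute ((l:ℂ) • (1:Module.End ℂ A)) ((m:ℂ) • (1:Module.End ℂ A)) :=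
    Commute.smul_left (Commute.smul_right (Commute.one_left 1) m) l
  have t1 : ev m (subst (l • 1) (mul (ev l (mul a b)) c))
      = ev (l + m) (mul (ev l (mul a b)) c) := by
    rw [ev_eq_opE, opE_subst hsc, ev_eq_opE (l := l + m), add_smul]
  have t2 : ev m (mapL ((opE (l • 1)).comp (bilinMap mul h.bilin a)) (mul b c))
      = ev l (mul a (ev m (mul b c))) := by
    set ψ₂ : A →ₗ[ℂ] A := (opE (l • 1)).comp (bilinMap mul h.bilin a) with hψ₂
    have hc : ∀ d, ψ₂ ((m • (1:Module.End ℂ A)) d) = (m • (1:Module.End ℂ A)) (ψ₂ d) :=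
      fun d => by simp
    rw [ev_eq_opE, ← psi_opE ψ₂ hc (mul b c)]
    have : ψ₂ (opE (m • 1) (mul b c)) = ev l (mul a (opE (m • 1) (mul b c))) := by
      rw [ev_eq_opE]; rfl
    rw [this, ← ev_eq_opE]
  have t3 : ev m ((Finsupp.lsum ℂ fun j => (shiftF j) ∘ₗ (subst (l • 1))
        ∘ₗ ((bilinMap mul h.bilin).flip c)) (mul b a))
      = ev (l + m) (mul (ev m (mul b a)) c) := by
    have key : (opE ((m:ℂ) • (1:Module.End ℂ A))).comp (Finsupp.lsum ℂ fun j => (shiftF j)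
          ∘ₗ (subst (l • 1)) ∘ₗ ((bilinMap mul h.bilin).flip c))
        = ((opE ((l + m) • (1:Module.End ℂ A))).comp
            ((bilinMap mul h.bilin).flip c)).comp (opE (m • 1)) := by
      apply Finsupp.lhom_ext
      intro j d
      simp only [LinearMap.comp_apply, Finsupp.lsum_single, opE_single]
      rw [opE_shiftF, opE_subst hsc, add_smul]
      have e : ∀ u : A, ((m • (1:Module.End ℂ A)) ^ j) u = m ^ j • u := fun u => by
        rw [smul_pow]; simp
      rw [e, e, map_smul, map_smul]
    have h5 := LinearMap.congr_fun key (mul b a)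
    simp only [LinearMap.comp_apply] at h5
    rw [ev_eq_opE, h5, ← ev_eq_opE, ← ev_eq_opE]
    rfl
  rw [t1, t2, t3]
  exact h.lsym l m a b c

set_option maxHeartbeats 1600000 in
lemma LSop (s γ : ℂ) (x y z : A) :
    ev (γ - s) (substNeg D (mul (ev s (mul x y)) z))
      - ev s (mul x (ev (γ - s) (substNeg D (mul y z))))
    = ev (γ - s) (substNeg D (mul (ev s (substNeg D (mul y x))) z))
      - ev γ (substNeg D (mul y (ev s (mul x z)))) := by
  set T : Module.End ℂ A := -D - γ • 1 with hT
  have hkey := congrArg (opE T) (LSpack h s x y z)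
  rw [map_sub, map_sub] at hkey
  have hsc : Commute ((s:ℂ) • (1:Module.End ℂ A)) T :=
    Commute.smul_left (Commute.one_left T) s
  have hST : (s • (1:Module.End ℂ A)) + T = -D - (γ - s) • 1 := by
    rw [hT, sub_smul]
    abel
  -- term 1
  have t1 : opE T (subst (s • 1) (mul (ev s (mul x y)) z))
      = ev (γ - s) (substNeg D (mul (ev s (mul x y)) z)) := by
    rw [opE_subst hsc, hST, ← Qe_opE]
  -- term 2
  have t2 : opE T (mapL ((opE (s • 1)).comp (bilinMap mul h.bilin x)) (mul y z))
      = ev s (mul x (ev (γ - s) (substNeg D (mul y z)))) := by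
    set ψ₂ : A →ₗ[ℂ] A := (opE (s • 1)).comp (bilinMap mul h.bilin x) with hψ₂
    have hDψ : ∀ d, ψ₂ (D d) = D (ψ₂ d) + s • (ψ₂ d) := fun d => by
      have e1 : ψ₂ (D d) = opE (s • 1) (mul x (D d)) := rfl
      have e2 : ψ₂ d = opE (s • 1) (mul x d) := rfl
      rw [e1, e2, R3op h (commute_smul_one D s) x d]
      simp
    have hc : ∀ d, ψ₂ ((-D - (γ - s) • 1) d) = T (ψ₂ d) := by
      intro d
      have h1 : (-D - (γ - s) • (1:Module.End ℂ A)) d = -(D d) - (γ - s) • d := by simp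
      rw [h1, map_sub, map_neg, hDψ, map_smul, hT]
      simp only [LinearMap.sub_apply, LinearMap.neg_apply, LinearMap.smul_apply,
        Module.End.one_apply]
      rw [sub_smul]
      abel
    rw [← psi_opE ψ₂ hc (mul y z)]
    have e3 : ψ₂ (opE (-D - (γ - s) • 1) (mul y z))
        = ev s (mul x (opE (-D - (γ - s) • 1) (mul y z))) := by
      rw [ev_eq_opE]; rfl
    rw [e3, ← Qe_opE]
  -- term 3
  have t3 : opE T ((Finsupp.lsum ℂ fun j => (shiftF j) ∘ₗ (subst (s • 1))
        ∘ₗ ((bilinMap mul h.bilin).flip z)) (mul y x))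
      = ev (γ - s) (substNeg D (mul (ev s (substNeg D (mul y x))) z)) := by
    set ψ₃ : A →ₗ[ℂ] A := (opE (s • 1 + T)).comp ((bilinMap mul h.bilin).flip z) with hψ₃
    have hDψ : ∀ d, ψ₃ (D d) = -((s • 1 + T) (ψ₃ d)) := fun d => by
      have e1 : ψ₃ (D d) = opE (s • 1 + T) (mul (D d) z) := rfl
      have e2 : ψ₃ d = opE (s • 1 + T) (mul d z) := rfl
      rw [e1, e2, R2op h (s • 1 + T) d z]
    have hc : ∀ d, ψ₃ ((-D - s • 1) d) = T (ψ₃ d) := by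
      intro d
      have h1 : (-D - s • (1:Module.End ℂ A)) d = -(D d) - s • d := by simp
      rw [h1, map_sub, map_neg, hDψ, map_smul, neg_neg]
      simp only [LinearMap.add_apply, LinearMap.smul_apply, Module.End.one_apply]
      abel
    have key : (opE T).comp (Finsupp.lsum ℂ fun j => (shiftF j) ∘ₗ (subst (s • 1))
          ∘ₗ ((bilinMap mul h.bilin).flip z))
        = ψ₃.comp (opE (-D - s • 1)) := by
      apply Finsupp.lhom_ext
      intro j d
      simp only [LinearMap.comp_apply, Finsupp.lsum_single, opE_single]
      rw [opE_shiftF, opE_subst hsc]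
      exact (psi_pow_apply ψ₃ hc j d).symm
    have h5 := LinearMap.congr_fun key (mul y x)
    simp only [LinearMap.comp_apply] at h5
    rw [h5, hψ₃]
    simp only [LinearMap.comp_apply]
    rw [hST, ← Qe_opE, ← Qe_opE]
    rfl
  -- term 4
  have t4 : opE T (mul y (ev s (mul x z)))
      = ev γ (substNeg D (mul y (ev s (mul x z)))) := by
    rw [Qe_opE]
  rw [t1, t2, t3, t4] at hkey
  exact hkey

lemma mul_sub1 (x1 x2 y : A) : mul (x1 - x2) y = mul x1 y - mul x2 y :=
  LinearMap.map_sub₂ (bilinMap mul h.bilin) x1 x2 y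

lemma mul_sub2 (x y1 y2 : A) : mul x (y1 - y2) = mul x y1 - mul x y2 :=
  map_sub (bilinMap mul h.bilin x) y1 y2

lemma sesq1Q (l : ℂ) (a b : A) :
    ev l (substNeg D (mul b (D a))) = (-l) • ev l (substNeg D (mul b a)) := by
  rw [Qe_opE, R3op h (commute_D_negsub l) b a, Qe_opE]
  simp only [LinearMap.sub_apply, LinearMap.neg_apply, LinearMap.smul_apply,
    Module.End.one_apply]
  rw [neg_smul]
  abel

lemma sesq2Q (l : ℂ) (a b : A) :
    ev l (substNeg D (mul (D b) a))
      = D (ev l (substNeg D (mul b a))) + l • ev l (substNeg D (mul b a)) := by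
  rw [Qe_opE, R2op h (-D - l • 1) b a, Qe_opE]
  simp only [LinearMap.sub_apply, LinearMap.neg_apply, LinearMap.smul_apply,
    Module.End.one_apply]
  abel

omit h in
lemma invol (l : ℂ) (p : ℕ →₀ A) :
    ev l (substNeg D (substNeg D p)) = ev l p := by
  rw [Qe_opE, opE_substNeg (commute_D_negsub l), sub_sub_cancel, ← ev_eq_opE]

set_option maxHeartbeats 1600000 in
theorem subAdjacent : IsLieConf D (fun a b => mul a b - substNeg D (mul b a)) := by
  constructor
  · refine ⟨fun a a' b => ?_, fun r a b => ?_, fun a b b' => ?_, fun r a b => ?_⟩ <;> dsimp only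
    · rw [h.bilin.1, h.bilin.2.2.1, substNeg_add]; abel
    · rw [h.bilin.2.1, h.bilin.2.2.2, substNeg_smul, smul_sub]
    · rw [h.bilin.2.2.1, h.bilin.1, substNeg_add]; abel
    · rw [h.bilin.2.2.2, h.bilin.2.1, substNeg_smul, smul_sub]
  · intro l a b
    rw [ev_sub, ev_sub, h.sesq1, sesq1Q h, smul_sub]
  · intro l a b
    rw [ev_sub, ev_sub, h.sesq2, sesq2Q h, map_sub, smul_sub]
    abel
  · intro l a b
    rw [ev_sub, substNeg_sub, ev_sub, invol, neg_sub]
  · intro l m a b c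
    rw [ev_sub (l := m) (p := mul b c), ev_sub (l := l) (p := mul a c),
      ev_sub (l := l) (p := mul a b)]
    simp only [mul_sub1 h, mul_sub2 h, substNeg_sub, ev_sub]
    -- now 12 terms
    have hE1 : ev (l + m) (mul (ev l (substNeg D (mul b a))) c)
        = ev (l + m) (mul (ev m (mul b a)) c) := by
      have := E1 h (l + m) l b a c
      rwa [add_sub_cancel_left] at this
    have hE2 : ev (l + m) (substNeg D (mul c (ev l (substNeg D (mul b a)))))
        = ev (l + m) (substNeg D (mul c (ev m (mul b a)))) := by
      have := E2 h (l + m) l c b a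
      rwa [add_sub_cancel_left] at this
    rw [hE1, hE2]
    have h0 := h.lsym l m a b c
    have h1 : ev m (substNeg D (mul (ev l (mul a c)) b))
          - ev l (mul a (ev m (substNeg D (mul c b))))
        = ev m (substNeg D (mul (ev l (substNeg D (mul c a))) b))
          - ev (l + m) (substNeg D (mul c (ev l (mul a b)))) := by
      have := LSop h l (l + m) a c b
      rwa [add_sub_cancel_left] at this
    have h2 : ev l (substNeg D (mul (ev m (mul b c)) a))
          - ev m (mul b (ev l (substNeg D (mul c a))))
        = ev l (substNeg D (mul (ev m (substNeg D (mul c b))) a))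
          - ev (l + m) (substNeg D (mul c (ev m (mul b a)))) := by
      have := LSop h m (l + m) b c a
      rwa [add_sub_cancel_right] at this
    -- substitute
    have e1 : ev (l + m) (mul (ev l (mul a b)) c)
        - (ev (l + m) (mul (ev m (mul b a)) c) - ev m (mul b (ev l (mul a c))))
        = ev l (mul a (ev m (mul b c))) := by
      rw [← h0, sub_sub_cancel]
    have e2 : ev m (substNeg D (mul (ev l (mul a c)) b))
        - (ev m (substNeg D (mul (ev l (substNeg D (mul c a))) b))
          - ev (l + m) (substNeg D (mul c (ev l (mul a b)))))
        = ev l (mul a (ev m (substNeg D (mul c b)))) := by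
      rw [← h1, sub_sub_cancel]
    have e3 : ev l (substNeg D (mul (ev m (mul b c)) a))
        = ev m (mul b (ev l (substNeg D (mul c a))))
          + (ev l (substNeg D (mul (ev m (substNeg D (mul c b))) a))
            - ev (l + m) (substNeg D (mul c (ev m (mul b a))))) := by
      rw [add_comm]
      exact (sub_eq_iff_eq_add.mp h2)
    rw [← e1, ← e2, e3]
    abel

end Rules




end Aux


/-- If `ω ∈ C²(A, A)` generates a linear deformation of the
left-symmetric conformal algebra `A`, then
`ω̃_λ(a, b) = ω_λ(a, b) - ω_{-∂-λ}(b, a)` generates a linear deformation of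
the sub-adjacent Lie conformal algebra `g(A)`:
`[a_λ b] + t ω̃_λ(a, b)` is a Lie conformal bracket (for every value of `t`). -/
theorem deformation_subadjacent {A : Type*} [AddCommGroup A] [Module ℂ A]
    (D : Module.End ℂ A) (mul ω : A → A → ℕ →₀ A)
    (hA : IsLSC D mul) (hb : Bilin ω)
    (hs1 : ∀ (l : ℂ) (a b : A), ev l (ω (D a) b) = (-l) • ev l (ω a b))
    (hs2 : ∀ (l : ℂ) (a b : A), ev l (ω a (D b)) = D (ev l (ω a b)) + l • ev l (ω a b))
    (hdef : ∀ t : ℂ, IsLSC D (fun a b => mul a b + t • ω a b)) :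
    ∀ t : ℂ, IsLieConf D (fun a b =>
      (mul a b - substNeg D (mul b a)) + t • (ω a b - substNeg D (ω b a))) := by
  intro t
  have h2 := subAdjacent (hdef t)
  have e : (fun a b => (mul a b - substNeg D (mul b a)) + t • (ω a b - substNeg D (ω b a)))
      = fun a b => (fun a b => mul a b + t • ω a b) a b
          - substNeg D ((fun a b => mul a b + t • ω a b) b a) := by
    funext a b
    dsimp only
    rw [substNeg_add, substNeg_smul, smul_sub]
    abel
  rw [e]
  exact h2


end LSCpaper
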